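/- Let μ = (μ_1,…,μ_N) ∈ {0,1}^N and let λ ⊆ {1,…,N} be such that (λ ∩ S_μ, λ ∩ T_μ) satisfies the interlacing condition. Then for every complex number q with q ≠ 0 and q ≠ 1, the sum over all 1 ≤ m ≤ N with m ∉ λ of (−1)^{μ_m} q^{κ(m,μ,λ)} equals (q^{N−|μ|} − q^{|μ|})/(q − 1), where |μ| = μ_1 + ⋯ + μ_N. -/

import Mathlib

/-- `S_μ = {s : μ_s = 0}`. -/
def Sset {N : ℕ} (μ : Fin N → ℕ) : Finset (Fin N) :=
  Finset.univ.filter fun s => μ s = 0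

/-- `T_μ = {t : μ_t = 1}`. -/
def Tset {N : ℕ} (μ : Fin N → ℕ) : Finset (Fin N) :=
  Finset.univ.filter fun t => μ t = 1

/-- The interlacing condition. -/
def Interlacing {N : ℕ} (π₁ π₂ : Finset (Fin N)) : Prop :=
  ∃ h : π₁.card = π₂.card,
    ∀ i : Fin π₁.card,
      (↑(π₁.orderIsoOfFin rfl i) : Fin N) < (↑(π₂.orderIsoOfFin h.symm i) : Fin N)

/-- `κ(m,μ,λ) = |S_μ(m−1) \ λ| + |T_μ(m+1) \ λ| + |λ|/2`, where
`S_μ(m−1) = {s ∈ S_μ : s < m}` and `T_μ(m+1) = {t ∈ T_μ : t > m}`. -/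
def kappa {N : ℕ} (μ : Fin N → ℕ) (lam : Finset (Fin N)) (m : Fin N) : ℕ :=
  (((Sset μ).filter fun s => s < m) \ lam).card +
    (((Tset μ).filter fun t => m < t) \ lam).card + lam.card / 2

lemma filter_card_split {N : ℕ} (C : Finset (Fin N)) (m : Fin N)
    (p₁ p₂ : Fin N → Prop) [DecidablePred p₁] [DecidablePred p₂]
    (h : ∀ a ∈ C, p₁ a ↔ (p₂ a ∨ a = m)) (h2 : ¬ p₂ m) :
    (C.filter p₁).card = (C.filter p₂).card + (if m ∈ C then 1 else 0) := by
  classical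
  rw [Finset.card_filter, Finset.card_filter]
  have hcong : ∀ a ∈ C, (if p₁ a then (1:ℕ) else 0)
      = (if p₂ a then 1 else 0) + (if a = m then 1 else 0) := by
    intro a ha
    rcases eq_or_ne a m with rfl | hne
    · have : p₁ a := (h a ha).mpr (Or.inr rfl)
      simp [this, h2]
    · have : p₁ a ↔ p₂ a := by
        rw [h a ha]
        simp [hne]
      simp [hne, this]
  rw [Finset.sum_congr rfl hcong, Finset.sum_add_distrib,
    Finset.sum_ite_eq' C m (fun _ => (1:ℕ))]

/-- `Σ_{m ∉ λ} (−1)^{μ_m} q^{κ(m,μ,λ)} = (q^{N−|μ|} − q^{|μ|})/(q − 1)`. -/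
theorem stmt19 {N : ℕ} (hN : 1 ≤ N) (μ : Fin N → ℕ) (hμ : ∀ i, μ i ≤ 1)
    (lam : Finset (Fin N)) (hint : Interlacing (lam ∩ Sset μ) (lam ∩ Tset μ))
    (q : ℂ) (hq0 : q ≠ 0) (hq1 : q ≠ 1) :
    ∑ m ∈ Finset.univ \ lam, (-1 : ℂ) ^ (μ m) * q ^ kappa μ lam m =
      (q ^ (N - ∑ i, μ i) - q ^ (∑ i, μ i)) / (q - 1) := by
  classical
  obtain ⟨hd, -⟩ := hint
  have hq1' : q - 1 ≠ 0 := sub_ne_zero.mpr hq1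
  set A := Sset μ \ lam with hA
  set B := Tset μ \ lam with hB
  set c := lam.card / 2 with hcdef
  set k := ∑ i, μ i with hk
  -- lam splits into its S and T parts
  have hlamcard : lam.card = (lam ∩ Sset μ).card + (lam ∩ Tset μ).card := by
    have hdisj : Disjoint (lam ∩ Sset μ) (lam ∩ Tset μ) := by
      rw [Finset.disjoint_left]
      intro a ha hb
      simp only [Sset, Tset, Finset.mem_inter, Finset.mem_filter] at ha hb
      omega
    have hunion : (lam ∩ Sset μ) ∪ (lam ∩ Tset μ) = lam := by
      ext a
      simp only [Sset, Tset, Finset.mem_inter, Finset.mem_filter, Finset.mem_union,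
        Finset.mem_univ, true_and]
      have := hμ a
      constructor
      · tauto
      · intro h
        by_cases h' : μ a = 0
        · exact Or.inl ⟨h, h'⟩
        · exact Or.inr ⟨h, by omega⟩
    rw [← Finset.card_union_of_disjoint hdisj, hunion]
  have hcS : c = (lam ∩ Sset μ).card := by omega
  have hcT : c = (lam ∩ Tset μ).card := by omega
  -- |T| = k
  have hTk : (Tset μ).card = k := by
    rw [hk, Sset, Tset] at *
    rw [Finset.card_filter]
    apply Finset.sum_congr rfl
    intro i _
    have := hμ i
    by_cases h : μ i = 1 <;> simp [h] <;> omega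
  have hSTcard : (Sset μ).card + (Tset μ).card = N := by
    have hdisj : Disjoint (Sset μ) (Tset μ) := by
      rw [Finset.disjoint_left]
      intro a ha hb
      simp only [Sset, Tset, Finset.mem_filter] at ha hb
      omega
    have hunion : Sset μ ∪ Tset μ = Finset.univ := by
      ext a
      simp only [Sset, Tset, Finset.mem_filter, Finset.mem_union, Finset.mem_univ, true_and,
        iff_true]
      have := hμ a
      omega
    rw [← Finset.card_union_of_disjoint hdisj, hunion, Finset.card_univ, Fintype.card_fin]
  -- the telescoping exponent function
  set Wf : ℕ → ℕ := fun j =>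
    (A.filter fun s : Fin N => (s : ℕ) < j).card + (B.filter fun t : Fin N => j ≤ (t : ℕ)).card + c
    with hWf
  have stepS : ∀ m : Fin N, (A.filter fun s : Fin N => (s:ℕ) < (m:ℕ)+1).card
      = (A.filter fun s : Fin N => (s:ℕ) < (m:ℕ)).card + (if m ∈ A then 1 else 0) := by
    intro m
    apply filter_card_split
    · intro a _
      rw [Fin.ext_iff]
      omega
    · omega
  have stepT : ∀ m : Fin N, (B.filter fun t : Fin N => (m:ℕ) ≤ (t:ℕ)).card
      = (B.filter fun t : Fin N => (m:ℕ)+1 ≤ (t:ℕ)).card + (if m ∈ B then 1 else 0) := by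
    intro m
    apply filter_card_split
    · intro a _
      rw [Fin.ext_iff]
      omega
    · omega
  -- rewrite kappa
  have hkapp : ∀ m : Fin N, kappa μ lam m =
      (A.filter fun s : Fin N => (s:ℕ) < (m:ℕ)).card
        + (B.filter fun t : Fin N => (m:ℕ)+1 ≤ (t:ℕ)).card + c := by
    intro m
    unfold kappa
    congr 2
    · congr 1
      ext a
      simp only [hA, Finset.mem_filter, Finset.mem_sdiff, Fin.lt_def]
      tauto
    · congr 1
      ext a
      simp only [hB, Finset.mem_filter, Finset.mem_sdiff, Fin.lt_def]
      constructor
      · rintro ⟨⟨h1, h2⟩, h3⟩; exact ⟨⟨h1, h3⟩, h2⟩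
      · rintro ⟨⟨h1, h3⟩, h2⟩; exact ⟨⟨h1, h2⟩, h3⟩
  -- key per-term identity
  have key : ∀ m : Fin N,
      (if m ∈ lam then 0 else (-1:ℂ)^(μ m) * q ^ kappa μ lam m)
        = (q ^ Wf ((m:ℕ)+1) - q ^ Wf (m:ℕ)) / (q - 1) := by
    intro m
    have hS := stepS m
    have hT := stepT m
    have hk' := hkapp m
    by_cases hm : m ∈ lam
    · have hmA : m ∉ A := by simp [hA, hm]
      have hmB : m ∉ B := by simp [hB, hm]
      have hWeq : Wf ((m:ℕ)+1) = Wf (m:ℕ) := by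
        simp only [hWf]
        rw [hS, hT]
        simp [hmA, hmB]
      rw [hWeq, sub_self, zero_div, if_pos hm]
    · by_cases h0 : μ m = 0
      · have hmA : m ∈ A := by
          simp [hA, Sset, Finset.mem_sdiff, Finset.mem_filter, hm, h0]
        have hmB : m ∉ B := by
          simp [hB, Tset, Finset.mem_sdiff, Finset.mem_filter, h0]
        have hW1 : Wf ((m:ℕ)+1) = Wf (m:ℕ) + 1 := by
          simp only [hWf]
          rw [hS, hT]
          simp [hmA, hmB]
          omega
        have hWk : kappa μ lam m = Wf (m:ℕ) := by
          rw [hk']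
          simp only [hWf]
          rw [hT]
          simp [hmB]
        rw [if_neg hm, h0, hW1, hWk, pow_zero, one_mul, pow_succ]
        field_simp
      · have h1 : μ m = 1 := by have := hμ m; omega
        have hmA : m ∉ A := by
          simp [hA, Sset, Finset.mem_sdiff, Finset.mem_filter, h1]
        have hmB : m ∈ B := by
          simp [hB, Tset, Finset.mem_sdiff, Finset.mem_filter, hm, h1]
        have hW1 : Wf (m:ℕ) = Wf ((m:ℕ)+1) + 1 := by
          simp only [hWf]
          rw [hS, hT]
          simp [hmA, hmB]
          omega
        have hWk : kappa μ lam m = Wf ((m:ℕ)+1) := by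
          rw [hk']
          simp only [hWf]
          rw [hS]
          simp [hmA]
        rw [if_neg hm, h1, hWk, hW1, pow_one, pow_succ]
        field_simp
        ring
  -- endpoint values
  have hW0 : Wf 0 = k := by
    simp only [hWf]
    have h1 : A.filter (fun s : Fin N => (s:ℕ) < 0) = ∅ := by
      apply Finset.filter_false_of_mem; intro a _; omega
    have h2 : B.filter (fun t : Fin N => 0 ≤ (t:ℕ)) = B := by
      apply Finset.filter_true_of_mem; intro a _; omega
    rw [h1, h2, Finset.card_empty]
    have h3 : B.card + (Tset μ ∩ lam).card = (Tset μ).card :=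
      Finset.card_sdiff_add_card_inter _ _
    rw [Finset.inter_comm] at h3
    omega
  have hWN : Wf N = N - k := by
    simp only [hWf]
    have h1 : A.filter (fun s : Fin N => (s:ℕ) < N) = A := by
      apply Finset.filter_true_of_mem; intro a _; exact a.isLt
    have h2 : B.filter (fun t : Fin N => N ≤ (t:ℕ)) = ∅ := by
      apply Finset.filter_false_of_mem; intro a _; have := a.isLt; omega
    rw [h1, h2, Finset.card_empty]
    have h3 : A.card + (Sset μ ∩ lam).card = (Sset μ).card :=
      Finset.card_sdiff_add_card_inter _ _
    rw [Finset.inter_comm] at h3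
    omega
  -- main computation
  have hsd : Finset.univ \ lam = Finset.univ.filter (fun m => m ∉ lam) :=
    Finset.sdiff_eq_filter _ _
  calc ∑ m ∈ Finset.univ \ lam, (-1 : ℂ) ^ (μ m) * q ^ kappa μ lam m
      = ∑ m : Fin N, (if m ∈ lam then 0 else (-1:ℂ)^(μ m) * q ^ kappa μ lam m) := by
        rw [hsd, Finset.sum_filter]
        apply Finset.sum_congr rfl
        intro m _
        by_cases hm : m ∈ lam <;> simp [hm]
    _ = ∑ m : Fin N,
          (fun j => (q ^ Wf (j+1) - q ^ Wf j) / (q - 1)) (m:ℕ) :=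
        Finset.sum_congr rfl (fun m _ => key m)
    _ = ∑ j ∈ Finset.range N, (q ^ Wf (j+1) - q ^ Wf j) / (q - 1) :=
        Fin.sum_univ_eq_sum_range
          (fun j => (q ^ Wf (j+1) - q ^ Wf j) / (q - 1)) N
    _ = (∑ j ∈ Finset.range N, (q ^ Wf (j+1) - q ^ Wf j)) / (q - 1) := by
        rw [Finset.sum_div]
    _ = (q ^ Wf N - q ^ Wf 0) / (q - 1) := by
        rw [Finset.sum_range_sub (fun j => q ^ Wf j)]
    _ = (q ^ (N - k) - q ^ k) / (q - 1) := by rw [hW0, hWN]
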